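/- If σ is a strategy for Nature over a causal measurement scenario M, and s, t ∈ σ with s ⊆ t and x is accessible from s (i.e., s ⊢⊆ x), then for any outcome o, if s ∪ {(x,o)} ∈ σ then t ∪ {(x,o)} ∈ σ. -/
import Mathlib


/-- A causal measurement scenario: a type of measurements `X`, outcome sets
`O x`, and an enabling relation from sets of events to measurements. -/
structure CMS (X Ω : Type*) where
  O : X → Set Ω
  enab : Set (X × Ω) → X → Prop

namespace CMS

variable {X Ω : Type*}

/-- A set of events is consistent if it is the graph of a partial function. -/
def consistent (s : Set (X × Ω)) : Prop :=
  ∀ x o o', (x, o) ∈ s → (x, o') ∈ s → o = o'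

/-- The domain of a set of events: the measurements performed. -/
def domain (s : Set (X × Ω)) : Set X := {x | ∃ o, (x, o) ∈ s}

/-- Accessibility: `x` may be performed after the events in `s`. -/
def acc (M : CMS X Ω) (s : Set (X × Ω)) (x : X) : Prop :=
  x ∉ domain s ∧ ∃ t ⊆ s, M.enab t x

/-- Histories: the least family containing `∅` and closed under adjoining
an event `(x, o)` for accessible `x` and `o ∈ O x`. -/
inductive Hist (M : CMS X Ω) : Set (X × Ω) → Prop
  | empty : Hist M ∅
  | step {s : Set (X × Ω)} {x : X} {o : Ω} :
      Hist M s → M.acc s x → o ∈ M.O x → Hist M (s ∪ {(x, o)})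

/-- A strategy for Nature: a (nonempty) downward-closed set of histories,
deterministic and total: unique outcome responses to accessible measurements. -/
structure IsStrategy (M : CMS X Ω) (σ : Set (Set (X × Ω))) : Prop where
  nonempty : σ.Nonempty
  hist : ∀ s ∈ σ, M.Hist s
  dc : ∀ s t : Set (X × Ω), M.Hist s → s ⊆ t → t ∈ σ → s ∈ σ
  resp : ∀ s ∈ σ, ∀ x : X, M.acc s x →
    ∃! o : Ω, o ∈ M.O x ∧ s ∪ {(x, o)} ∈ σ

/-- The restriction `M_U` of a scenario to a subset `U` of measurements. -/
def restrict (M : CMS X Ω) (U : Set X) : CMS X Ω where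
  O := M.O
  enab := fun s x => M.enab s x ∧ domain s ∪ {x} ⊆ U

end CMS

open CMS

lemma hist_finite {X Ω : Type*} {M : CMS X Ω} {t : Set (X × Ω)} (ht : M.Hist t) :
    t.Finite := by
  induction ht with
  | empty => exact Set.finite_empty
  | step _ _ _ ih => exact ih.union (Set.finite_singleton _)

lemma mem_O_of_hist {X Ω : Type*} {M : CMS X Ω} {t : Set (X × Ω)} (ht : M.Hist t) :
    ∀ x o, (x, o) ∈ t → o ∈ M.O x := by
  induction ht with
  | empty => intro x o h; exact absurd h (Set.notMem_empty _)
  | @step s x' o' _ _ hO ih =>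
    intro x o h
    rcases h with h | h
    · exact ih x o h
    · rw [Set.mem_singleton_iff, Prod.mk.injEq] at h
      rw [h.1, h.2]; exact hO

lemma exists_acc_of_ssubset {X Ω : Type*} {M : CMS X Ω} {t : Set (X × Ω)}
    (ht : M.Hist t) : ∀ s, s ⊆ t → s ≠ t →
    ∃ y ω, (y, ω) ∈ t ∧ (y, ω) ∉ s ∧ M.acc s y ∧ ω ∈ M.O y := by
  induction ht with
  | empty =>
    intro s hs hne
    exact absurd (Set.subset_empty_iff.mp hs) hne
  | @step s₀ x₀ o₀ h₁ hacc₀ hO₀ ih =>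
    intro s hs hne
    by_cases hmem : (x₀, o₀) ∈ s
    · -- consider s₁ = s \ {(x₀,o₀)} ⊆ s₀
      have hs₁ : s \ {(x₀, o₀)} ⊆ s₀ := by
        intro a ha
        rcases hs ha.1 with h | h
        · exact h
        · exact absurd h ha.2
      have hseq : s = (s \ {(x₀, o₀)}) ∪ {(x₀, o₀)} := by
        ext a
        constructor
        · intro ha
          by_cases h : a = (x₀, o₀)
          · exact Or.inr h
          · exact Or.inl ⟨ha, h⟩
        · rintro (ha | ha)
          · exact ha.1
          · rw [Set.mem_singleton_iff] at ha; rw [ha]; exact hmem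
      have hne₁ : s \ {(x₀, o₀)} ≠ s₀ := by
        intro h
        apply hne
        rw [hseq, h]
      obtain ⟨y, ω, hyt, hys, haccy, hωO⟩ := ih _ hs₁ hne₁
      have hyx₀ : y ≠ x₀ := by
        intro h
        exact hacc₀.1 ⟨ω, by rw [← h]; exact hyt⟩
      refine ⟨y, ω, Or.inl hyt, ?_, ⟨?_, ?_⟩, hωO⟩
      · intro h
        by_cases h' : (y, ω) = (x₀, o₀)
        · exact hyx₀ (congrArg Prod.fst h')
        · exact hys ⟨h, h'⟩
      · rintro ⟨o, ho⟩
        by_cases h' : (y, o) = (x₀, o₀)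
        · exact hyx₀ (congrArg Prod.fst h')
        · exact haccy.1 ⟨o, ⟨ho, h'⟩⟩
      · obtain ⟨u, hu, hen⟩ := haccy.2
        exact ⟨u, fun a ha => ((hu ha).1 : a ∈ s), hen⟩
    · have hs' : s ⊆ s₀ := by
        intro a ha
        rcases hs ha with h | h
        · exact h
        · rw [Set.mem_singleton_iff] at h; rw [h] at ha; exact absurd ha hmem
      by_cases heq : s = s₀
      · refine ⟨x₀, o₀, Or.inr rfl, hmem, ?_, hO₀⟩
        rw [heq]; exact hacc₀
      · obtain ⟨y, ω, hyt, hys, haccy, hωO⟩ := ih _ hs' heq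
        exact ⟨y, ω, Or.inl hyt, hys, haccy, hωO⟩

/-- Monotonicity of strategies for Nature. -/
theorem monotonicity {X Ω : Type*} (M : CMS X Ω) (σ : Set (Set (X × Ω)))
    (hσ : M.IsStrategy σ) (s t : Set (X × Ω)) (hs : s ∈ σ) (ht : t ∈ σ)
    (hst : s ⊆ t) (x : X) (hacc : M.acc s x) (o : Ω)
    (ho : s ∪ {(x, o)} ∈ σ) : t ∪ {(x, o)} ∈ σ := by
  have key : ∀ n : ℕ, ∀ s : Set (X × Ω), s ∈ σ → s ⊆ t → M.acc s x →
      s ∪ {(x, o)} ∈ σ → ∀ hf : (t \ s).Finite, hf.toFinset.card ≤ n →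
      t ∪ {(x, o)} ∈ σ := by
    intro n
    induction n with
    | zero =>
      intro s hs hst hacc ho hf hcard
      have h0 : hf.toFinset = ∅ := Finset.card_eq_zero.mp (Nat.le_zero.mp hcard)
      have : t \ s = ∅ := by
        rw [← Set.Finite.coe_toFinset hf, h0]; simp
      have hts : t ⊆ s := Set.diff_eq_empty.mp this
      have : s = t := Set.Subset.antisymm hst hts
      rw [← this]; exact ho
    | succ n ihn =>
      intro s hs hst hacc ho hf hcard
      by_cases hts : s = t
      · rw [← hts]; exact ho
      · obtain ⟨y, ω, hyt, hys, haccy, hωO⟩ :=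
          exists_acc_of_ssubset (hσ.hist t ht) s hst hts
        have hoO : o ∈ M.O x :=
          mem_O_of_hist (hσ.hist _ ho) x o (Or.inr rfl)
        obtain ⟨w, -, huniq⟩ := hσ.resp s hs x hacc
        by_cases hyx : y = x
        · subst hyx
          have h1 : M.Hist (s ∪ {(y, ω)}) :=
            Hist.step (hσ.hist s hs) hacc hωO
          have h2 : s ∪ {(y, ω)} ∈ σ :=
            hσ.dc _ t h1 (Set.union_subset hst (Set.singleton_subset_iff.mpr hyt)) ht
          have hoω : o = ω := (huniq o ⟨hoO, ho⟩).trans (huniq ω ⟨hωO, h2⟩).symm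
          have : t ∪ {(y, o)} = t := by
            apply Set.union_eq_self_of_subset_right
            rw [Set.singleton_subset_iff, hoω]; exact hyt
          rw [this]; exact ht
        · have h1 : M.Hist (s ∪ {(y, ω)}) :=
            Hist.step (hσ.hist s hs) haccy hωO
          have hsub : s ∪ {(y, ω)} ⊆ t :=
            Set.union_subset hst (Set.singleton_subset_iff.mpr hyt)
          have hs' : s ∪ {(y, ω)} ∈ σ := hσ.dc _ t h1 hsub ht
          have hacc' : M.acc (s ∪ {(y, ω)}) x := by
            refine ⟨?_, ?_⟩
            · rintro ⟨o', ho'⟩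
              rcases ho' with h | h
              · exact hacc.1 ⟨o', h⟩
              · rw [Set.mem_singleton_iff, Prod.mk.injEq] at h
                exact hyx h.1.symm
            · obtain ⟨u, hu, hen⟩ := hacc.2
              exact ⟨u, hu.trans Set.subset_union_left, hen⟩
          obtain ⟨o', ⟨ho'O, ho'σ⟩, -⟩ := hσ.resp _ hs' x hacc'
          have h3 : M.Hist (s ∪ {(x, o')}) :=
            Hist.step (hσ.hist s hs) hacc ho'O
          have h4 : s ∪ {(x, o')} ∈ σ := by
            refine hσ.dc _ ((s ∪ {(y, ω)}) ∪ {(x, o')}) h3 ?_ ho'σ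
            exact Set.union_subset (Set.subset_union_left.trans Set.subset_union_left)
              Set.subset_union_right
          have ho'o : o' = o := (huniq o' ⟨ho'O, h4⟩).trans (huniq o ⟨hoO, ho⟩).symm
          rw [ho'o] at ho'σ
          have hf' : (t \ (s ∪ {(y, ω)})).Finite :=
            hf.subset (Set.diff_subset_diff_right Set.subset_union_left)
          have hlt : hf'.toFinset.card < hf.toFinset.card := by
            apply Finset.card_lt_card
            rw [Set.Finite.toFinset_ssubset_toFinset]
            constructor
            · exact Set.diff_subset_diff_right Set.subset_union_left
            · intro h
              have : (y, ω) ∈ t \ (s ∪ {(y, ω)}) := h ⟨hyt, hys⟩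
              exact this.2 (Or.inr rfl)
          exact ihn _ hs' hsub hacc' ho'σ hf' (Nat.lt_succ_iff.mp (lt_of_lt_of_le hlt hcard))
  have hf : (t \ s).Finite := (hist_finite (hσ.hist t ht)).subset Set.diff_subset
  exact key hf.toFinset.card s hs hst hacc ho hf le_rfl
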